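/- Fix n ≥ 1 and let Q_k = (0,2^{-k})^n. With φ*(t) = 2^{-n/2}(k(2^n − 1) − 1) for t ∈ Q_k \ Q_{k+1}, the average of φ*² over Q_k equals 1 + 2^{-n}(2^n − 1)² k² for every k ≥ 0. Consequently ⟨φ*²⟩_{Q_k} − ⟨φ*⟩_{Q_k}² = 1 for all k. -/

import Mathlib

open MeasureTheory

/-- The cube Q_k = (0, 2^{-k})^n. -/
def dCube (n k : ℕ) : Set (Fin n → ℝ) :=
  Set.univ.pi fun _ : Fin n => Set.Ioo (0 : ℝ) ((2 : ℝ)⁻¹ ^ k)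

lemma dCube_meas (n k : ℕ) : MeasurableSet (dCube n k) :=
  MeasurableSet.univ_pi fun _ => measurableSet_Ioo

lemma dCube_subset (n : ℕ) {k j : ℕ} (h : k ≤ j) : dCube n j ⊆ dCube n k := by
  apply Set.pi_mono
  intro i _
  apply Set.Ioo_subset_Ioo le_rfl
  exact pow_le_pow_of_le_one (by norm_num) (by norm_num) h

lemma volume_dCube (n k : ℕ) :
    volume (dCube n k) = ENNReal.ofReal (((2:ℝ)⁻¹ ^ n) ^ k) := by
  rw [dCube, volume_pi_pi]
  simp [Real.volume_Ioo, ← ENNReal.ofReal_pow, ← pow_mul, Nat.mul_comm]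
  rw [← ENNReal.inv_pow, ← ENNReal.ofReal_pow (by positivity), ← pow_mul, Nat.mul_comm]

lemma dCube_disj (n : ℕ) : Pairwise (Function.onFun Disjoint
    fun j => dCube n j \ dCube n (j + 1)) := by
  intro a b hab
  wlog h : a < b generalizing a b
  · exact (this hab.symm (hab.lt_or_gt.resolve_left h)).symm
  refine Set.disjoint_left.2 fun t hta htb => ?_
  exact hta.2 (dCube_subset n h htb.1)

lemma dCube_eq_iUnion (n : ℕ) (hn : 1 ≤ n) (k : ℕ) :
    dCube n k = ⋃ j : ℕ, (dCube n (k + j) \ dCube n (k + j + 1)) := by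
  ext t
  constructor
  · intro ht
    have i0 : Fin n := ⟨0, hn⟩
    have hpos : 0 < t i0 := (ht i0 (Set.mem_univ i0)).1
    classical
    have hex : ∃ m : ℕ, t ∉ dCube n m := by
      obtain ⟨m, hm⟩ := exists_pow_lt_of_lt_one hpos (by norm_num : (2:ℝ)⁻¹ < 1)
      exact ⟨m, fun hmem => absurd (hmem i0 (Set.mem_univ i0)).2 (not_lt.2 hm.le)⟩
    let m := Nat.find hex
    have hm : t ∉ dCube n m := Nat.find_spec hex
    have hk : k < m := by
      rcases lt_or_ge k m with h | h
      · exact h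
      · exact absurd (dCube_subset n h ht) hm
    have hmem : t ∈ dCube n (m - 1) := by
      by_contra hc
      have := Nat.find_le (h := hex) hc
      omega
    refine Set.mem_iUnion.2 ⟨m - 1 - k, ?_⟩
    have h1 : k + (m - 1 - k) = m - 1 := by omega
    have h2 : k + (m - 1 - k) + 1 = m := by omega
    rw [h1, show m - 1 + 1 = m from by omega]
    exact ⟨hmem, hm⟩
  · intro ht
    obtain ⟨j, hj⟩ := Set.mem_iUnion.1 ht
    exact dCube_subset n (Nat.le_add_right k j) hj.1

lemma volume_ann (n j : ℕ) :
    volume (dCube n j \ dCube n (j + 1)) =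
      ENNReal.ofReal (((2:ℝ)⁻¹ ^ n) ^ j - ((2:ℝ)⁻¹ ^ n) ^ (j + 1)) := by
  have hle : ((2:ℝ)⁻¹ ^ n) ^ (j+1) ≤ ((2:ℝ)⁻¹ ^ n) ^ j :=
    pow_le_pow_of_le_one (by positivity) (by
      exact pow_le_one₀ (by norm_num) (by norm_num)) (by omega)
  rw [measure_diff (dCube_subset n (Nat.le_succ j)) (dCube_meas n (j+1)).nullMeasurableSet
      (by rw [volume_dCube]; exact ENNReal.ofReal_ne_top),
    volume_dCube, volume_dCube, ← ENNReal.ofReal_sub _ (by positivity)]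

lemma integrableOn_ann (n j : ℕ) (f : (Fin n → ℝ) → ℝ) (c : ℕ → ℝ)
    (hf : ∀ t ∈ dCube n j \ dCube n (j+1), f t = c j) :
    IntegrableOn f (dCube n j \ dCube n (j+1)) := by
  refine (integrableOn_const ?_).congr_fun (fun t ht => (hf t ht).symm)
    ((dCube_meas n j).diff (dCube_meas n (j+1)))
  rw [volume_ann]; exact ENNReal.ofReal_lt_top.ne

lemma setIntegral_ann (n j : ℕ) (f : (Fin n → ℝ) → ℝ) (c : ℕ → ℝ)
    (hf : ∀ t ∈ dCube n j \ dCube n (j+1), f t = c j) :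
    ∫ t in dCube n j \ dCube n (j+1), f t =
      c j * (((2:ℝ)⁻¹ ^ n) ^ j - ((2:ℝ)⁻¹ ^ n) ^ (j + 1)) := by
  have hle : ((2:ℝ)⁻¹ ^ n) ^ (j+1) ≤ ((2:ℝ)⁻¹ ^ n) ^ j :=
    pow_le_pow_of_le_one (by positivity)
      (pow_le_one₀ (by norm_num) (by norm_num)) (by omega)
  rw [setIntegral_congr_fun ((dCube_meas n j).diff (dCube_meas n (j+1))) hf,
    setIntegral_const, measureReal_def, volume_ann, ENNReal.toReal_ofReal (by linarith), smul_eq_mul, mul_comm]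

lemma integral_dCube (n : ℕ) (hn : 1 ≤ n) (f : (Fin n → ℝ) → ℝ) (c : ℕ → ℝ)
    (hf : ∀ j : ℕ, ∀ t ∈ dCube n j \ dCube n (j+1), f t = c j)
    (hc : Summable fun j : ℕ => |c j| * ((2:ℝ)⁻¹ ^ n) ^ j) (k : ℕ) :
    ∫ t in dCube n k, f t =
      ∑' j : ℕ, c (k+j) * (((2:ℝ)⁻¹^n)^(k+j) - ((2:ℝ)⁻¹^n)^(k+j+1)) := by
  set r : ℝ := (2:ℝ)⁻¹ ^ n with hrdef
  have hr0 : 0 ≤ r := by positivity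
  have hr1 : r ≤ 1 := pow_le_one₀ (by norm_num) (by norm_num)
  have hle : ∀ j : ℕ, r ^ (j+1) ≤ r ^ j := fun j =>
    pow_le_pow_of_le_one hr0 hr1 (by omega)
  set s : ℕ → Set (Fin n → ℝ) := fun j => dCube n (k+j) \ dCube n (k+j+1) with hs
  have hmeas : ∀ j, MeasurableSet (s j) := fun j =>
    (dCube_meas n (k+j)).diff (dCube_meas n (k+j+1))
  have hdisj : Pairwise (Function.onFun Disjoint s) := fun a b hab =>
    dCube_disj n (show k+a ≠ k+b by omega)
  have huni : (⋃ j, s j) = dCube n k := (dCube_eq_iUnion n hn k).symm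
  have hint : IntegrableOn f (⋃ j, s j) := by
    refine integrableOn_iUnion_of_summable_integral_norm
      (fun j => integrableOn_ann n (k+j) f c (hf (k+j))) ?_
    have heq : ∀ j : ℕ, (∫ t in s j, ‖f t‖) = |c (k+j)| * (r^(k+j) - r^(k+j+1)) := by
      intro j
      exact setIntegral_ann n (k+j) (fun t => ‖f t‖) (fun j => |c j|)
        (fun t ht => by simp only [hf (k+j) t ht, Real.norm_eq_abs])
    rw [funext heq]
    apply Summable.of_nonneg_of_le
      (fun j => mul_nonneg (abs_nonneg _) (by have := hle (k+j); have := pow_nonneg hr0 (k+j+1); linarith))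
      (fun j => ?_) (hc.comp_injective (add_right_injective k))
    have : r ^ (k+j) - r^(k+j+1) ≤ r ^ (k+j) := by
      have := pow_nonneg hr0 (k+j+1); linarith
    calc |c (k+j)| * (r^(k+j) - r^(k+j+1)) ≤ |c (k+j)| * r^(k+j) :=
          mul_le_mul_of_nonneg_left this (abs_nonneg _)
      _ = (fun j => |c j| * r ^ j) ((k + ·) j) := rfl
  rw [← huni, integral_iUnion hmeas hdisj hint]
  exact tsum_congr fun j => setIntegral_ann n (k+j) f c (hf (k+j))

lemma tsum_tail_eq (a T : ℕ → ℝ) (ha : Summable a)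
    (hrec : ∀ k, a k = T k - T (k+1))
    (hT : Filter.Tendsto T Filter.atTop (nhds 0)) (k : ℕ) :
    ∑' j : ℕ, a (k + j) = T k := by
  set F : ℕ → ℝ := fun k => ∑' j : ℕ, a (k + j) with hF
  have hsum : ∀ k, Summable fun j => a (k + j) :=
    fun k => ha.comp_injective (add_right_injective k)
  have hstep : ∀ k, F k = a k + F (k+1) := by
    intro k
    calc F k = a (k+0) + ∑' j, a (k + (j+1)) := (hsum k).tsum_eq_zero_add
      _ = a k + F (k+1) := by
          rw [Nat.add_zero]
          exact congrArg _ (tsum_congr fun j => by rw [show k + (j+1) = (k+1)+j by omega])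
  have hconst : ∀ k, F k - T k = F 0 - T 0 := by
    intro k
    induction k with
    | zero => rfl
    | succ m ih =>
      rw [← ih, hstep m, hrec m]; ring
  have hFlim : Filter.Tendsto F Filter.atTop (nhds 0) := by
    have := tendsto_sum_nat_add a
    refine this.congr fun i => tsum_congr fun j => by rw [Nat.add_comm]
  have hlim : Filter.Tendsto (fun k => F k - T k) Filter.atTop (nhds 0) := by
    have h := hFlim.sub hT
    simpa using h
  have h0 : F 0 - T 0 = 0 := by
    have h2 : Filter.Tendsto (fun k => F k - T k) Filter.atTop (nhds (F 0 - T 0)) := by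
      rw [funext hconst]
      exact tendsto_const_nhds
    exact tendsto_nhds_unique h2 hlim
  have := hconst k
  linarith

lemma sq_rpow (n : ℕ) : ((2:ℝ) ^ (-(n:ℝ)/2))^2 = ((2:ℝ)^n)⁻¹ := by
  rw [← Real.rpow_natCast ((2:ℝ) ^ (-(n:ℝ)/2)) 2, ← Real.rpow_mul (by norm_num)]
  rw [show (-(n:ℝ)/2) * ((2:ℕ):ℝ) = -(n:ℝ) by push_cast; ring]
  rw [Real.rpow_neg (by norm_num), Real.rpow_natCast]

lemma summable_quad_geom {r : ℝ} (hr : |r| < 1) (α β γ : ℝ) :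
    Summable fun j : ℕ => (α + β*(j:ℝ) + γ*(j:ℝ)^2) * r^j := by
  have h0 := summable_pow_mul_geometric_of_norm_lt_one (R := ℝ) 0 (by rwa [Real.norm_eq_abs])
  have h1 := summable_pow_mul_geometric_of_norm_lt_one (R := ℝ) 1 (by rwa [Real.norm_eq_abs])
  have h2 := summable_pow_mul_geometric_of_norm_lt_one (R := ℝ) 2 (by rwa [Real.norm_eq_abs])
  exact (((h0.mul_left α).add (h1.mul_left β)).add (h2.mul_left γ)).congr
    (fun j => by ring)

lemma tendsto_quad_geom {r : ℝ} (hr : |r| < 1) (α β γ : ℝ) :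
    Filter.Tendsto (fun k : ℕ => r^k * (α + β*(k:ℝ) + γ*(k:ℝ)^2))
      Filter.atTop (nhds 0) :=
  (summable_quad_geom hr α β γ).tendsto_atTop_zero.congr fun k => by ring

lemma rec2 (q : ℝ) (hq : q ≠ 0) (k : ℕ) :
    q⁻¹*((k:ℝ)*(q-1)-1)^2 * ((q⁻¹)^k - (q⁻¹)^(k+1)) =
      (q⁻¹)^k*(1+q⁻¹*(q-1)^2*(k:ℝ)^2) - (q⁻¹)^(k+1)*(1+q⁻¹*(q-1)^2*((k:ℝ)+1)^2) := by
  rw [pow_succ]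
  simp only [inv_pow]
  field_simp
  ring

lemma rec1 (s q : ℝ) (hq : q ≠ 0) (k : ℕ) :
    s*((k:ℝ)*(q-1)-1) * ((q⁻¹)^k - (q⁻¹)^(k+1)) =
      (q⁻¹)^k*(s*((q-1)*(k:ℝ))) - (q⁻¹)^(k+1)*(s*((q-1)*((k:ℝ)+1))) := by
  rw [pow_succ]
  field_simp
  ring

lemma summable_mul_diff (c : ℕ → ℝ) {r : ℝ} (hr0 : 0 ≤ r) (hr1 : r ≤ 1)
    (hc : Summable fun j : ℕ => |c j| * r^j) :
    Summable fun j : ℕ => c j * (r^j - r^(j+1)) := by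
  refine Summable.of_norm_bounded hc (fun j => ?_)
  have h1 : 0 ≤ r^(j+1) := pow_nonneg hr0 _
  have h2 : r^(j+1) ≤ r^j := pow_le_pow_of_le_one hr0 hr1 (by omega)
  rw [Real.norm_eq_abs, abs_mul]
  apply mul_le_mul_of_nonneg_left _ (abs_nonneg _)
  rw [abs_of_nonneg (by linarith)]
  linarith
theorem stmt8 (n : ℕ) (hn : 1 ≤ n) (φ : (Fin n → ℝ) → ℝ)
    (hφ : ∀ k : ℕ, ∀ t ∈ dCube n k \ dCube n (k + 1),
      φ t = (2 : ℝ) ^ (-(n : ℝ) / 2) * ((k : ℝ) * ((2 : ℝ) ^ n - 1) - 1)) :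
    ∀ k : ℕ,
      (⨍ t in dCube n k, (φ t) ^ 2) =
        1 + ((2 : ℝ) ^ n)⁻¹ * ((2 : ℝ) ^ n - 1) ^ 2 * (k : ℝ) ^ 2 ∧
      (⨍ t in dCube n k, (φ t) ^ 2) - (⨍ t in dCube n k, φ t) ^ 2 = 1 := by
  intro k
  set s1 : ℝ := (2:ℝ) ^ (-(n:ℝ)/2) with hs1def
  set q : ℝ := (2:ℝ) ^ n with hqdef
  set r : ℝ := (2:ℝ)⁻¹ ^ n with hrdef
  have hrq : r = q⁻¹ := by rw [hrdef, hqdef, inv_pow]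
  have hq0 : (0:ℝ) < q := by rw [hqdef]; positivity
  have hq1 : (1:ℝ) ≤ q := by rw [hqdef]; exact one_le_pow₀ (by norm_num)
  have hr0 : (0:ℝ) ≤ r := by rw [hrdef]; positivity
  have hrlt : r < 1 := by
    rw [hrdef]; exact pow_lt_one₀ (by norm_num) (by norm_num) (by omega)
  have habs : |r| < 1 := by rw [abs_of_nonneg hr0]; exact hrlt
  have hs1sq : s1 ^ 2 = q⁻¹ := by rw [hs1def, hqdef]; exact sq_rpow n
  have hs1pos : 0 < s1 := by rw [hs1def]; positivity
  -- value functions on annuli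
  set c2 : ℕ → ℝ := fun j => s1^2 * ((j:ℝ)*(q-1)-1)^2 with hc2def
  set c1 : ℕ → ℝ := fun j => s1 * ((j:ℝ)*(q-1)-1) with hc1def
  have hf2 : ∀ j : ℕ, ∀ t ∈ dCube n j \ dCube n (j+1), φ t ^ 2 = c2 j := by
    intro j t ht; rw [hφ j t ht, hc2def, mul_pow]
  have hf1 : ∀ j : ℕ, ∀ t ∈ dCube n j \ dCube n (j+1), φ t = c1 j := by
    intro j t ht; rw [hφ j t ht, hc1def]
  -- summability
  have hsum2 : Summable fun j : ℕ => |c2 j| * r ^ j := by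
    refine (summable_quad_geom habs (s1^2) (-2*s1^2*(q-1)) (s1^2*(q-1)^2)).congr fun j => ?_
    rw [hc2def, abs_of_nonneg (by positivity)]
    ring
  have hsum1 : Summable fun j : ℕ => |c1 j| * r ^ j := by
    refine Summable.of_nonneg_of_le (fun j => by positivity) (fun j => ?_)
      (summable_quad_geom habs s1 (s1*(q-1)) 0)
    have hx : (0:ℝ) ≤ (j:ℝ)*(q-1) := mul_nonneg (Nat.cast_nonneg j) (by linarith)
    have habs2 : |(j:ℝ)*(q-1) - 1| ≤ (j:ℝ)*(q-1) + 1 := abs_le.mpr ⟨by linarith, by linarith⟩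
    calc |c1 j| * r ^ j = s1 * |(j:ℝ)*(q-1)-1| * r ^ j := by
          rw [hc1def, abs_mul, abs_of_nonneg hs1pos.le]
      _ ≤ s1 * ((j:ℝ)*(q-1)+1) * r ^ j := by
          have := pow_nonneg hr0 j
          apply mul_le_mul_of_nonneg_right _ this
          exact mul_le_mul_of_nonneg_left habs2 hs1pos.le
      _ = (s1 + s1*(q-1)*(j:ℝ) + 0*(j:ℝ)^2) * r ^ j := by ring
  -- integrals
  have hint2 := integral_dCube n hn (fun t => φ t ^ 2) c2 hf2 hsum2 k
  have hint1 := integral_dCube n hn φ c1 hf1 hsum1 k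
  -- tail sums
  have htail2 : ∑' j : ℕ, c2 (k+j) * (r^(k+j) - r^(k+j+1)) =
      r^k * (1 + q⁻¹*(q-1)^2*(k:ℝ)^2) := by
    refine tsum_tail_eq (fun m => c2 m * (r^m - r^(m+1)))
      (fun m => r^m * (1 + q⁻¹*(q-1)^2*(m:ℝ)^2))
      (summable_mul_diff c2 hr0 hrlt.le hsum2) (fun m => ?_) ?_ k
    · rw [hc2def]
      simp only [hs1sq, hrq]
      push_cast
      exact rec2 q hq0.ne' m
    · exact (tendsto_quad_geom habs 1 0 (q⁻¹*(q-1)^2)).congr fun m => by ring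
  have htail1 : ∑' j : ℕ, c1 (k+j) * (r^(k+j) - r^(k+j+1)) =
      r^k * (s1*((q-1)*(k:ℝ))) := by
    refine tsum_tail_eq (fun m => c1 m * (r^m - r^(m+1)))
      (fun m => r^m * (s1*((q-1)*(m:ℝ))))
      (summable_mul_diff c1 hr0 hrlt.le hsum1) (fun m => ?_) ?_ k
    · rw [hc1def]
      simp only [hrq]
      push_cast
      exact rec1 s1 q hq0.ne' m
    · exact (tendsto_quad_geom habs 0 (s1*(q-1)) 0).congr fun m => by ring
  -- averages
  have hvol : (volume (dCube n k)).toReal = r ^ k := by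
    rw [volume_dCube, ENNReal.toReal_ofReal (by positivity), hrdef]
  have hrk : r ^ k ≠ 0 := by
    have : (0:ℝ) < r := by rw [hrq]; positivity
    positivity
  have havg2 : (⨍ t in dCube n k, (φ t) ^ 2) = 1 + q⁻¹*(q-1)^2*(k:ℝ)^2 := by
    rw [setAverage_eq, measureReal_def, hvol, hint2, htail2, smul_eq_mul, inv_mul_cancel_left₀ hrk]
  have havg1 : (⨍ t in dCube n k, φ t) = s1*((q-1)*(k:ℝ)) := by
    rw [setAverage_eq, measureReal_def, hvol, hint1, htail1, smul_eq_mul, inv_mul_cancel_left₀ hrk]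
  refine ⟨havg2, ?_⟩
  rw [havg2, havg1]
  have : (s1*((q-1)*(k:ℝ)))^2 = s1^2 * ((q-1)*(k:ℝ))^2 := by ring
  rw [this, hs1sq]
  ring
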